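/- Let A ⊆ D and suppose f(X) and f(X^{∖A}) are integrable. If f(X) = f(X^{∖A}) almost surely, then f(X) = E[f(X) | σ(X_{D∖A})] almost surely. -/

import Mathlib

open MeasureTheory ProbabilityTheory Filter

lemma aux_bounded {Ω : Type*} [m0 : MeasurableSpace Ω] (μ : Measure Ω) [IsProbabilityMeasure μ]
    (Y : Ω → ℝ) (hY : Measurable Y)
    (C : ℝ) (hC0 : 0 ≤ C) (hC : ∀ ω, |Y ω| ≤ C)
    {m : MeasurableSpace Ω} (hm : m ≤ m0)
    (hcond : μ[(fun ω => Y ω * Y ω)|m] =ᵐ[μ] fun ω => (μ[Y|m]) ω * (μ[Y|m]) ω) :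
    Y =ᵐ[μ] μ[Y|m] := by
  set Z := μ[Y|m] with hZ
  have hYint : Integrable Y μ :=
    memLp_one_iff_integrable.mp <| MemLp.of_bound hY.aestronglyMeasurable C
      (Eventually.of_forall fun ω => by simpa using hC ω)
  have hY2int : Integrable (fun ω => Y ω * Y ω) μ :=
    hYint.bdd_mul hY.aestronglyMeasurable
      (Eventually.of_forall fun ω => by simpa using hC ω)
  have hZm : StronglyMeasurable[m] Z := stronglyMeasurable_condExp
  have hZint : Integrable Z μ := integrable_condExp
  have hZbdd : ∀ᵐ ω ∂μ, |Z ω| ≤ C := by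
    have := ae_bdd_condExp_of_ae_bdd (μ := μ) (m := m) (R := ⟨C, hC0⟩)
      (f := Y) (Eventually.of_forall fun ω => hC ω)
    exact this
  have hZYint : Integrable (fun ω => Z ω * Y ω) μ :=
    hYint.bdd_mul (hZm.mono hm).aestronglyMeasurable
      (by filter_upwards [hZbdd] with ω hω; simpa using hω)
  have hZ2int : Integrable (fun ω => Z ω * Z ω) μ :=
    hZint.bdd_mul (hZm.mono hm).aestronglyMeasurable
      (by filter_upwards [hZbdd] with ω hω; simpa using hω)
  have hkey : μ[(fun ω => Z ω * Y ω)|m] =ᵐ[μ] fun ω => Z ω * Z ω :=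
    condExp_mul_of_stronglyMeasurable_left hZm hZYint hYint
  have h1 : ∫ ω, Y ω * Y ω ∂μ = ∫ ω, Z ω * Z ω ∂μ :=
    (integral_condExp hm (f := fun ω => Y ω * Y ω)).symm.trans (integral_congr_ae hcond)
  have h2 : ∫ ω, Z ω * Y ω ∂μ = ∫ ω, Z ω * Z ω ∂μ :=
    (integral_condExp hm (f := fun ω => Z ω * Y ω)).symm.trans (integral_congr_ae hkey)
  have hFeq : (fun ω => (Y ω - Z ω) ^ 2)
      = fun ω => Y ω * Y ω - 2 * (Z ω * Y ω) + Z ω * Z ω := by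
    funext ω; ring
  have hFint : Integrable (fun ω => (Y ω - Z ω) ^ 2) μ := by
    rw [hFeq]; exact (hY2int.sub (hZYint.const_mul 2)).add hZ2int
  have hsub : Integrable (fun ω => Y ω * Y ω - 2 * (Z ω * Y ω)) μ :=
    hY2int.sub (hZYint.const_mul 2)
  have hF0 : ∫ ω, (Y ω - Z ω) ^ 2 ∂μ = 0 := by
    rw [hFeq, integral_add hsub hZ2int,
      integral_sub hY2int (hZYint.const_mul 2), MeasureTheory.integral_const_mul, h1, h2]
    ring
  have := (integral_eq_zero_iff_of_nonneg (fun ω => sq_nonneg _) hFint).mp hF0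
  filter_upwards [this] with ω hω
  have : (Y ω - Z ω) ^ 2 = 0 := hω
  have := pow_eq_zero_iff (n := 2) (by norm_num) |>.mp this
  linarith [this]



/-- The σ-algebra `σ(X_{D∖A})` generated by the subvector of `X` indexed by `D ∖ A`. -/
def sigmaRestrict {Ω : Type*} {d : ℕ} (X : Ω → Fin d → ℝ) (A : Finset (Fin d)) :
    MeasurableSpace Ω :=
  MeasurableSpace.comap (fun ω => (fun i : {i : Fin d // i ∈ Aᶜ} => X ω i)) inferInstance

/-- If `f(X) = f(X^{∖A})` almost surely, then `f(X) = E[f(X) | σ(X_{D∖A})]` almost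
surely.  Here `X'` plays the role of `X^{∖A}`: it agrees with `X` on the coordinates
in `D∖A` almost surely, and `X` and `X'` are conditionally i.i.d. given `σ(X_{D∖A})`
(expressed by the product formula for conditional expectations of bounded measurable
functions of `X` and `X'`). -/
theorem stmt2
    {Ω : Type*} [MeasurableSpace Ω] (μ : Measure Ω) [IsProbabilityMeasure μ]
    {d : ℕ} (X : Ω → Fin d → ℝ) (hX : Measurable X)
    (f : (Fin d → ℝ) → ℝ) (hf : Measurable f)
    (A : Finset (Fin d)) (X' : Ω → (Fin d → ℝ)) (hX' : Measurable X')
    -- (a) `X` and `X'` are conditionally i.i.d. given `σ(X_{D∖A})`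
    (hiid : ∀ (φ φ' : (Fin d → ℝ) → ℝ),
      Measurable φ → Measurable φ' →
      (∃ C, ∀ x, |φ x| ≤ C) → (∃ C, ∀ x, |φ' x| ≤ C) →
      μ[(fun ω => φ (X ω) * φ' (X' ω)) | sigmaRestrict X A]
        =ᵐ[μ] fun ω => (μ[(fun ω => φ (X ω)) | sigmaRestrict X A]) ω *
                        (μ[(fun ω => φ' (X ω)) | sigmaRestrict X A]) ω)
    -- (b) `X'` agrees with `X` on the coordinates outside `A`, almost surely
    (hfix : ∀ᵐ ω ∂μ, ∀ i ∉ A, X' ω i = X ω i)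
    -- integrability of `f(X)` and `f(X^{∖A})`
    (hfint : Integrable (fun ω => f (X ω)) μ)
    (hfint' : Integrable (fun ω => f (X' ω)) μ)
    -- hypothesis: `f(X) = f(X^{∖A})` a.s.
    (h : (fun ω => f (X ω)) =ᵐ[μ] fun ω => f (X' ω)) :
    (fun ω => f (X ω)) =ᵐ[μ] μ[(fun ω => f (X ω)) | sigmaRestrict X A] := by
  have hm : sigmaRestrict X A ≤ ‹MeasurableSpace Ω› := by
    rw [sigmaRestrict]
    exact Measurable.comap_le (measurable_pi_lambda _ fun i => (measurable_pi_apply _).comp hX)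
  set g : ℕ → (Fin d → ℝ) → ℝ := fun n x => max (min (f x) n) (-(n : ℝ)) with hgdef
  have hg_meas : ∀ n, Measurable (g n) := fun n =>
    (hf.min measurable_const).max measurable_const
  have hg_bdd : ∀ n x, |g n x| ≤ n := fun n x => by
    rw [abs_le]
    exact ⟨le_max_right _ _, max_le (min_le_right _ _) (neg_le_self (by positivity))⟩
  have hg_abs : ∀ n x, |g n x| ≤ |f x| := fun n x => by
    rw [abs_le]
    constructor
    · exact le_trans (le_min (neg_abs_le _)
        ((neg_nonpos.mpr (abs_nonneg _)).trans (by positivity))) (le_max_left _ _)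
    · exact max_le ((min_le_left _ _).trans (le_abs_self _))
        ((neg_nonpos.mpr (by positivity)).trans (abs_nonneg _))
  -- each truncation is a.e. equal to its conditional expectation
  have hGn : ∀ n : ℕ, (fun ω => g n (X ω)) =ᵐ[μ] μ[(fun ω => g n (X ω))|sigmaRestrict X A] := by
    intro n
    have hprod := hiid (g n) (g n) (hg_meas n) (hg_meas n)
      ⟨n, hg_bdd n⟩ ⟨n, hg_bdd n⟩
    have heq : (fun ω => g n (X ω) * g n (X' ω)) =ᵐ[μ] fun ω => g n (X ω) * g n (X ω) := by
      filter_upwards [h] with ω hω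
      simp only [hgdef, hω]
    have hcond : μ[(fun ω => g n (X ω) * g n (X ω))|sigmaRestrict X A]
        =ᵐ[μ] fun ω => (μ[(fun ω => g n (X ω))|sigmaRestrict X A]) ω
          * (μ[(fun ω => g n (X ω))|sigmaRestrict X A]) ω :=
      (condExp_congr_ae heq).symm.trans hprod
    exact aux_bounded μ (fun ω => g n (X ω)) ((hg_meas n).comp hX) n (by positivity)
      (fun ω => hg_bdd n (X ω)) hm hcond
  -- integrability of truncations
  have hGint : ∀ n : ℕ, Integrable (fun ω => g n (X ω)) μ := fun n =>
    hfint.abs.mono' ((hg_meas n).comp hX).aestronglyMeasurable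
      (Eventually.of_forall fun ω => by simpa using hg_abs n (X ω))
  -- L¹ convergence argument
  set F : Ω → ℝ := fun ω => f (X ω) with hFdef
  have hcF : AEStronglyMeasurable (μ[F|sigmaRestrict X A]) μ :=
    (stronglyMeasurable_condExp.mono hm).aestronglyMeasurable
  suffices hsn : eLpNorm (F - μ[F|sigmaRestrict X A]) 1 μ = 0 by
    have hd : F - μ[F|sigmaRestrict X A] =ᵐ[μ] 0 :=
      (eLpNorm_eq_zero_iff (hfint.1.sub hcF) one_ne_zero).mp hsn
    filter_upwards [hd] with ω hω
    have : F ω - (μ[F|sigmaRestrict X A]) ω = 0 := hω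
    linarith
  -- the L¹ error bound for each n
  have hbound : ∀ n : ℕ, eLpNorm (F - μ[F|sigmaRestrict X A]) 1 μ
      ≤ 2 * eLpNorm (fun ω => F ω - g n (X ω)) 1 μ := by
    intro n
    have hdecomp : F - μ[F|sigmaRestrict X A]
        = (fun ω => F ω - g n (X ω))
          + (fun ω => g n (X ω) - (μ[F|sigmaRestrict X A]) ω) := by
      funext ω
      simp only [Pi.add_apply, Pi.sub_apply]
      ring
    have h2 : (fun ω => g n (X ω) - (μ[F|sigmaRestrict X A]) ω)
        =ᵐ[μ] μ[((fun ω => g n (X ω)) - F)|sigmaRestrict X A] := by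
      have hsub := condExp_sub (μ := μ) (m := sigmaRestrict X A) (hGint n) hfint
      filter_upwards [hsub, hGn n] with ω h1 hg1
      simp only [Pi.sub_apply] at h1 ⊢
      rw [h1, ← hg1]
    calc eLpNorm (F - μ[F|sigmaRestrict X A]) 1 μ
        ≤ eLpNorm (fun ω => F ω - g n (X ω)) 1 μ
          + eLpNorm (fun ω => g n (X ω) - (μ[F|sigmaRestrict X A]) ω) 1 μ := by
          rw [hdecomp]
          exact eLpNorm_add_le (hfint.1.sub ((hg_meas n).comp hX).aestronglyMeasurable)
            (((hg_meas n).comp hX).aestronglyMeasurable.sub hcF) le_rfl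
      _ ≤ eLpNorm (fun ω => F ω - g n (X ω)) 1 μ
          + eLpNorm ((fun ω => g n (X ω)) - F) 1 μ := by
          gcongr
          rw [eLpNorm_congr_ae h2]
          exact eLpNorm_one_condExp_le_eLpNorm _
      _ = 2 * eLpNorm (fun ω => F ω - g n (X ω)) 1 μ := by
          rw [show (fun ω => F ω - g n (X ω)) = (F - fun ω => g n (X ω)) from rfl,
            eLpNorm_sub_comm, two_mul]
  have htend : Tendsto (fun n : ℕ => eLpNorm (fun ω => F ω - g n (X ω)) 1 μ)
      atTop (nhds 0) := by
    simp_rw [eLpNorm_one_eq_lintegral_enorm]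
    have h0 : (0 : ENNReal) = ∫⁻ ω, (0 : ENNReal) ∂μ := by simp
    rw [h0]
    refine tendsto_lintegral_of_dominated_convergence (fun ω => 2 * ‖F ω‖₊) ?_ ?_ ?_ ?_
    · exact fun n => (((hf.comp hX).sub ((hg_meas n).comp hX)).nnnorm).coe_nnreal_ennreal
    · intro n
      refine Eventually.of_forall fun ω => ?_
      have hb : ‖F ω - g n (X ω)‖ ≤ 2 * ‖F ω‖ := by
        calc ‖F ω - g n (X ω)‖ ≤ ‖F ω‖ + ‖g n (X ω)‖ := norm_sub_le _ _
          _ ≤ ‖F ω‖ + ‖F ω‖ := add_le_add le_rfl (hg_abs n (X ω))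
          _ = 2 * ‖F ω‖ := by ring
      calc (‖F ω - g n (X ω)‖₊ : ENNReal) ≤ ((2 * ‖F ω‖₊ : NNReal) : ENNReal) := by
            exact_mod_cast hb
        _ = 2 * (‖F ω‖₊ : ENNReal) := by push_cast; ring
    · rw [lintegral_const_mul' _ _ (by norm_num)]
      exact ENNReal.mul_ne_top (by norm_num) hfint.2.ne
    · refine Eventually.of_forall fun ω => ?_
      have hev : ∀ᶠ n : ℕ in atTop,
          ((‖F ω - g n (X ω)‖₊ : ENNReal)) = (0 : ENNReal) := by
        filter_upwards [eventually_ge_atTop ⌈|F ω|⌉₊] with n hn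
        have hn' : |f (X ω)| ≤ (n : ℝ) := (Nat.le_ceil _).trans (by exact_mod_cast hn)
        have hgn : g n (X ω) = F ω := by
          simp only [hgdef]
          rw [abs_le] at hn'
          rw [min_eq_left hn'.2, max_eq_left hn'.1]
        simp [hgn]
      exact Tendsto.congr' (EventuallyEq.symm hev) tendsto_const_nhds
  have htend2 : Tendsto (fun n : ℕ => 2 * eLpNorm (fun ω => F ω - g n (X ω)) 1 μ)
      atTop (nhds 0) := by
    have h2t := ENNReal.Tendsto.const_mul (a := 2) htend (Or.inr (by norm_num))
    simpa using h2t
  have hle := ge_of_tendsto' htend2 hbound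
  exact le_antisymm hle zero_le
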